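/- arXiv:1403.7571 — 6 statements merged into one kernel-verified Lean document; each statement's English description precedes it below -/
import Mathlib

section
/- Let A be an m×m matrix over ℤ[q,q⁻¹], p a prime number, and suppose l ∈ ℤ[q,q⁻¹]^m can be written as l = (1−q)x + p·y for vectors x, y over ℤ[q,q⁻¹]. Then lᵀ^* A l ≠ 1 − q. (Consequently, if lᵀ^* A l = 1−q, the integer vector l(1) is primitive, i.e. the gcd of its entries is 1.) -/
open LaurentPolynomial Matrix

/-- The sesquilinear pairing `h₀ᵀ^* A h₁`, where `^*` is `q ↦ q⁻¹`. -/
noncomputable def pairL {m : ℕ} (A : Matrix (Fin m) (Fin m) (LaurentPolynomial ℤ))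
    (h₀ h₁ : Fin m → LaurentPolynomial ℤ) : LaurentPolynomial ℤ :=
  dotProduct (fun i => invert (h₀ i)) (A.mulVec h₁)

/-- If `l = (1-q)x + p·y` for a prime `p`, then `lᵀ^* A l ≠ 1 - q`. -/
theorem stmt2 {m : ℕ} (A : Matrix (Fin m) (Fin m) (LaurentPolynomial ℤ))
    (p : ℕ) (hp : Nat.Prime p)
    (x y l : Fin m → LaurentPolynomial ℤ)
    (hl : ∀ i, l i = (1 - T 1) * x i + (p : LaurentPolynomial ℤ) * y i) :
    pairL A l l ≠ 1 - T 1 := by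
  haveI := Fact.mk hp
  intro h
  set ε : DualNumber (ZMod p) := DualNumber.eps with hεdef
  have hε2 : ε * ε = 0 := DualNumber.eps_mul_eps
  have hu1 : (1 + ε) * (1 - ε) = 1 := by
    have : (1 + ε) * (1 - ε) = 1 - ε * ε := by ring
    rw [this, hε2, sub_zero]
  set u : (DualNumber (ZMod p))ˣ :=
    ⟨1 + ε, 1 - ε, hu1, by rw [mul_comm]; exact hu1⟩ with hudef
  set ψ : LaurentPolynomial ℤ →ₐ[ℤ] DualNumber (ZMod p) :=
    AddMonoidAlgebra.lift ℤ (DualNumber (ZMod p)) ℤ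
      ((Units.coeHom _).comp (zpowersHom _ u)) with hψdef
  have hψT : ∀ n : ℤ, ψ (T n) = ↑(u ^ n) := by
    intro n
    show ψ (AddMonoidAlgebra.single n 1) = _
    rw [hψdef, AddMonoidAlgebra.lift_single]
    simp [zpowersHom_apply]
  have hup : (↑u : DualNumber (ZMod p)) = 1 + ε := rfl
  have huinv : (↑u⁻¹ : DualNumber (ZMod p)) = 1 - ε := rfl
  have hψp : ψ ((p : LaurentPolynomial ℤ)) = 0 := by
    rw [map_natCast]
    have h2 := map_natCast (algebraMap (ZMod p) (DualNumber (ZMod p))) p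
    rw [← h2, ZMod.natCast_self, map_zero]
  have key : (1 - (↑u⁻¹ : DualNumber (ZMod p))) * (1 - ↑u) = 0 := by
    rw [hup, huinv]
    have : (1 - (1 - ε)) * (1 - (1 + ε)) = -(ε * ε) := by ring
    rw [this, hε2, neg_zero]
  have hψl : ∀ i, ψ (l i) = (1 - ↑u) * ψ (x i) := by
    intro i
    rw [hl i, _root_.map_add, _root_.map_mul, _root_.map_mul, _root_.map_sub, _root_.map_one, hψT 1, hψp, zero_mul, add_zero,
      zpow_one]
  have hψil : ∀ i, ψ (invert (l i)) = (1 - ↑u⁻¹) * ψ (invert (x i)) := by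
    intro i
    have : invert (l i) = (1 - T (-1)) * invert (x i)
        + (p : LaurentPolynomial ℤ) * invert (y i) := by
      rw [hl i, _root_.map_add, _root_.map_mul, _root_.map_mul, _root_.map_sub, _root_.map_one, invert_T, map_natCast]
    rw [this, _root_.map_add, _root_.map_mul, _root_.map_mul, _root_.map_sub, _root_.map_one, hψT (-1), hψp, zero_mul, add_zero,
      _root_.zpow_neg, zpow_one]
  have hz : ψ (pairL A l l) = 0 := by
    rw [pairL]
    unfold dotProduct Matrix.mulVec
    rw [_root_.map_sum]
    refine Finset.sum_eq_zero fun i _ => ?_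
    rw [_root_.map_mul, hψil i]
    show (1 - ↑u⁻¹) * ψ (invert (x i)) * ψ (dotProduct (A i) l) = 0
    unfold dotProduct
    rw [_root_.map_sum]
    have hinner : ∑ j, ψ (A i j * l j)
        = (1 - ↑u) * ∑ j, ψ (A i j) * ψ (x j) := by
      rw [Finset.mul_sum]
      refine Finset.sum_congr rfl fun j _ => ?_
      rw [_root_.map_mul, hψl j]; ring
    rw [hinner]
    calc (1 - ↑u⁻¹) * ψ (invert (x i)) * ((1 - ↑u) * ∑ j, ψ (A i j) * ψ (x j))
        = ((1 - ↑u⁻¹) * (1 - ↑u)) * (ψ (invert (x i)) * ∑ j, ψ (A i j) * ψ (x j)) := by ring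
      _ = 0 := by rw [key, zero_mul]
  rw [h, _root_.map_sub, _root_.map_one, hψT 1, zpow_one, hup] at hz
  have : ε = 0 := by linear_combination -hz
  have h1 : (1 : ZMod p) = 0 := by
    have h2 := congrArg TrivSqZeroExt.snd this
    rw [hεdef] at h2
    simp at h2
  exact one_ne_zero h1
end

section
/- Let A be an m×m matrix over ℤ[q,q⁻¹] and let l₁,…,l_r ∈ ℤ[q,q⁻¹]^m satisfy l_kᵀ^* A l_k = 1 − q for each k and l_iᵀ^* A l_j = 0 for all i ≠ j. If c₁,…,c_r are integers such that the vector Σ_k c_k l_k is divisible by (1−q) (i.e. equals (1−q)x for some vector x over ℤ[q,q⁻¹]), then c₁ = ⋯ = c_r = 0. In particular, the integer vectors l₁(1),…,l_r(1) obtained by evaluating at q = 1 are linearly independent over ℤ. -/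
open LaurentPolynomial Matrix

/-- Evaluation of a Laurent polynomial at `q = 1` (the sum of its coefficients). -/
def evalOne (f : LaurentPolynomial ℤ) : ℤ := f.coeff.sum fun _ c => c

/-- Evaluation at `q = 1` as a ring homomorphism. -/
noncomputable def evalHom : LaurentPolynomial ℤ →+* ℤ :=
  AddMonoidAlgebra.liftNCRingHom (RingHom.id ℤ) 1 (fun _ _ => Commute.all _ _)

lemma evalHom_single (a : ℤ) (b : ℤ) : evalHom (AddMonoidAlgebra.single a b) = b := by
  have := AddMonoidAlgebra.liftNC_single ((RingHom.id ℤ) : ℤ →+ ℤ) (1 : Multiplicative ℤ →* ℤ) a b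
  simpa [evalHom, AddMonoidAlgebra.liftNCRingHom] using this

lemma evalHom_T (n : ℤ) : evalHom (T n) = 1 := by
  have : (T n : LaurentPolynomial ℤ) = AddMonoidAlgebra.single n 1 := rfl
  rw [this, evalHom_single]

lemma evalHom_eq (f : LaurentPolynomial ℤ) : evalHom f = evalOne f := by
  conv_lhs => rw [← AddMonoidAlgebra.sum_coeff_single f]
  rw [map_finsuppSum]
  simp only [evalHom_single, evalOne, Finsupp.sum]

lemma evalHom_C (a : ℤ) : evalHom (C a) = a := by
  have : (C a : LaurentPolynomial ℤ) = AddMonoidAlgebra.single 0 a := rfl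
  rw [this, evalHom_single]

lemma evalHom_toLaurent (p : Polynomial ℤ) : evalHom (p.toLaurent) = p.eval 1 := by
  have : evalHom.comp Polynomial.toLaurent = Polynomial.evalRingHom 1 := by
    apply Polynomial.ringHom_ext
    · intro a; simp [Polynomial.toLaurent_C, evalHom_C]
    · simp [Polynomial.toLaurent_X, evalHom_T]
  exact RingHom.congr_fun this p

lemma dvd_of_evalOne_zero (g : LaurentPolynomial ℤ) (h : evalHom g = 0) :
    (1 - T 1) ∣ g := by
  obtain ⟨n, p, hp⟩ := g.exists_T_pow
  have hp1 : p.eval 1 = 0 := by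
    rw [← evalHom_toLaurent, hp, _root_.map_mul, evalHom_T, h, zero_mul]
  obtain ⟨u, hu⟩ : (Polynomial.X - Polynomial.C 1) ∣ p := Polynomial.dvd_iff_isRoot.mpr hp1
  have hg : g = p.toLaurent * T (-(n:ℤ)) := by
    rw [hp, mul_assoc, ← T_add, add_neg_cancel, T_zero, mul_one]
  refine ⟨-(u.toLaurent * T (-(n:ℤ))), ?_⟩
  rw [hg, hu]
  simp only [_root_.map_mul, map_sub, Polynomial.toLaurent_X, Polynomial.toLaurent_C,
    _root_.map_one]
  ring

lemma pairL_sum_sum {m r : ℕ} (A : Matrix (Fin m) (Fin m) (LaurentPolynomial ℤ))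
    (c : Fin r → ℤ) (l : Fin r → Fin m → LaurentPolynomial ℤ) :
    pairL A (fun i => ∑ k, (c k : LaurentPolynomial ℤ) * l k i)
      (fun i => ∑ k, (c k : LaurentPolynomial ℤ) * l k i)
      = ∑ k, ∑ k', (c k : LaurentPolynomial ℤ) * (c k' : LaurentPolynomial ℤ)
          * pairL A (l k) (l k') := by
  simp only [pairL, dotProduct, mulVec, map_sum, _root_.map_mul, map_intCast,
    Finset.mul_sum, Finset.sum_mul]
  conv_lhs =>
    enter [2, i]
    rw [Finset.sum_comm]
    enter [2, k']
    rw [Finset.sum_comm]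
  rw [Finset.sum_comm]
  conv_lhs =>
    enter [2, k']
    rw [Finset.sum_comm]
  rw [Finset.sum_comm]
  refine Finset.sum_congr rfl fun k _ => Finset.sum_congr rfl fun k' _ =>
    Finset.sum_congr rfl fun i _ => Finset.sum_congr rfl fun j _ => ?_
  ring

lemma pairL_mul_mul {m : ℕ} (A : Matrix (Fin m) (Fin m) (LaurentPolynomial ℤ))
    (t : LaurentPolynomial ℤ) (x : Fin m → LaurentPolynomial ℤ) :
    pairL A (fun i => t * x i) (fun i => t * x i) = invert t * t * pairL A x x := by
  simp only [pairL, dotProduct, mulVec, _root_.map_mul, Finset.mul_sum, Finset.sum_mul]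
  refine Finset.sum_congr rfl fun i _ => ?_
  refine Finset.sum_congr rfl fun j _ => ?_
  ring

lemma one_sub_T_ne_zero : (1 - T 1 : LaurentPolynomial ℤ) ≠ 0 := by
  intro h
  have h1 : (T 0 : LaurentPolynomial ℤ) = T 1 := by
    rw [T_zero]; rw [sub_eq_zero] at h; exact h
  have h2 : (AddMonoidAlgebra.single (0:ℤ) (1:ℤ)) = AddMonoidAlgebra.single (1:ℤ) (1:ℤ) := h1
  rcases AddMonoidAlgebra.single_inj.mp h2 with ⟨h3, _⟩ | ⟨h3, _⟩ <;> norm_num at h3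

/-- If `l_kᵀ^* A l_k = 1 - q` for each `k` and `l_iᵀ^* A l_j = 0` for `i ≠ j`,
then any integer combination `Σ c_k l_k` which is divisible by `(1-q)` has all
`c_k = 0`; in particular the `l_k(1)` are linearly independent over `ℤ`. -/
theorem stmt3 {m r : ℕ} (A : Matrix (Fin m) (Fin m) (LaurentPolynomial ℤ))
    (l : Fin r → Fin m → LaurentPolynomial ℤ)
    (hself : ∀ k, pairL A (l k) (l k) = 1 - T 1)
    (horth : ∀ i j, i ≠ j → pairL A (l i) (l j) = 0) :
    (∀ (c : Fin r → ℤ) (x : Fin m → LaurentPolynomial ℤ),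
      (∀ i, ∑ k, (c k : LaurentPolynomial ℤ) * l k i = (1 - T 1) * x i) →
      ∀ k, c k = 0) ∧
    LinearIndependent ℤ (fun k => fun i => evalOne (l k i)) := by
  have main : ∀ (c : Fin r → ℤ) (x : Fin m → LaurentPolynomial ℤ),
      (∀ i, ∑ k, (c k : LaurentPolynomial ℤ) * l k i = (1 - T 1) * x i) →
      ∀ k, c k = 0 := by
    intro c x hx
    have h1 : pairL A (fun i => ∑ k, (c k : LaurentPolynomial ℤ) * l k i)
        (fun i => ∑ k, (c k : LaurentPolynomial ℤ) * l k i)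
        = ((∑ k, (c k)^2 : ℤ) : LaurentPolynomial ℤ) * (1 - T 1) := by
      rw [pairL_sum_sum]
      push_cast
      rw [Finset.sum_mul]
      refine Finset.sum_congr rfl fun k _ => ?_
      rw [Finset.sum_eq_single k]
      · rw [hself k]; ring
      · intro k' _ hk'; rw [horth k k' (Ne.symm hk'), mul_zero]
      · intro h; exact absurd (Finset.mem_univ k) h
    have hfx : (fun i => ∑ k, (c k : LaurentPolynomial ℤ) * l k i)
        = fun i => (1 - T 1) * x i := funext hx
    rw [hfx, pairL_mul_mul] at h1
    have hinv : invert (1 - T 1 : LaurentPolynomial ℤ) = 1 - T (-1) := by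
      rw [map_sub, _root_.map_one, invert_T]
    rw [hinv] at h1
    have hTT : (T 1 : LaurentPolynomial ℤ) * T (-1) = 1 := by
      rw [← T_add, add_neg_cancel, T_zero]
    have h1' : (1 - T 1 : LaurentPolynomial ℤ) * ((1 - T 1) * (-T (-1)) * pairL A x x)
        = (1 - T 1) * ((∑ k, (c k)^2 : ℤ) : LaurentPolynomial ℤ) := by
      linear_combination h1 + (1 - T 1) * pairL A x x * hTT
    have h2 := mul_left_cancel₀ one_sub_T_ne_zero h1'
    have h3 := congrArg evalHom h2
    simp only [_root_.map_mul, map_sub, map_neg, _root_.map_one, evalHom_T,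
      map_intCast] at h3
    have hsum : ∑ k, (c k)^2 = 0 := by
      have : (0:ℤ) = ∑ k, (c k)^2 := by simpa using h3
      omega
    intro k
    have := (Finset.sum_eq_zero_iff_of_nonneg (fun i _ => sq_nonneg (c i))).mp hsum k
      (Finset.mem_univ k)
    exact pow_eq_zero_iff (by norm_num) |>.mp this
  refine ⟨main, ?_⟩
  rw [Fintype.linearIndependent_iff]
  intro c hc k
  have hdvd : ∀ i, (1 - T 1) ∣ ∑ k, (c k : LaurentPolynomial ℤ) * l k i := by
    intro i
    apply dvd_of_evalOne_zero
    have := congrFun hc i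
    simp only [Finset.sum_apply, Pi.smul_apply, smul_eq_mul, Pi.zero_apply] at this
    rw [map_sum]
    simp only [_root_.map_mul, map_intCast, Int.cast_id, evalHom_eq]
    exact this
  choose x hxx using hdvd
  exact main c x hxx k
end

section
/- Fix n ∈ ℤ and coprime integers 0 < a < b, m = a+b. Let B be the cyclic band matrix over ℤ[q,q⁻¹] of the previous context (entries B_{ij} = q(−1)ⁿ, 1+q(−1)ⁿ, 1−q(−1)ⁿ, −1−q(−1)ⁿ, −1, or 0 according to i−j mod m), and let A be the unit upper triangular matrix with A_{ij} = B_{ij} for i < j. Then for h = (1,…,1) and any f ∈ ℤ[q,q⁻¹], one has (f h)ᵀ^* A (f h) = f^* f · ab · (1 + q(−1)ⁿ), where f^* = f(q⁻¹) and ᵀ^* denotes conjugate transpose. -/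
open LaurentPolynomial Matrix

/-- `(-1)ⁿ` for `n : ℤ`, as a Laurent polynomial. -/
noncomputable def sgn (n : ℤ) : LaurentPolynomial ℤ :=
  (((-1 : (LaurentPolynomial ℤ)ˣ) ^ n : (LaurentPolynomial ℤ)ˣ) : LaurentPolynomial ℤ)

/-- The entry of the cyclic band matrix of Example 1.6, as a function of the
difference `d = i - j ∈ ℤ/m`. -/
noncomputable def bandEntry (n : ℤ) (m a : ℕ) (d : ZMod m) : LaurentPolynomial ℤ :=
  if d = -(a : ZMod m) then T 1 * sgn n
  else if ∃ t ∈ Finset.Ico 1 a, d = -(t : ZMod m) then 1 + T 1 * sgn n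
  else if d = 0 then 1 - T 1 * sgn n
  else if ∃ t ∈ Finset.Ico 1 a, d = (t : ZMod m) then -1 - T 1 * sgn n
  else if d = (a : ZMod m) then -1
  else 0

/- ### Auxiliary lemmas -/

lemma aux_swap {R : Type*} [AddCommMonoid R] (g : ℕ → R) (n : ℕ) :
    ∑ i ∈ Finset.range n, ∑ r ∈ Finset.range i, g r
      = ∑ r ∈ Finset.range n, (n - 1 - r) • g r := by
  induction n with
  | zero => simp
  | succ n ih =>
    rw [Finset.sum_range_succ, ih, Finset.sum_range_succ]
    simp only [Nat.succ_sub_one, Nat.sub_self, zero_smul, add_zero]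
    rw [← Finset.sum_add_distrib]
    apply Finset.sum_congr rfl
    intro r hr
    rw [Finset.mem_range] at hr
    rw [← succ_nsmul]
    congr 1
    omega

lemma cast_inj' {m : ℕ} {x y : ℕ} (hx : x < m) (hy : y < m) :
    (x : ZMod m) = y ↔ x = y := by
  rw [ZMod.natCast_eq_natCast_iff, Nat.ModEq, Nat.mod_eq_of_lt hx, Nat.mod_eq_of_lt hy]

lemma neg_cast' {m t : ℕ} (ht : t ≤ m) : -((t : ℕ) : ZMod m) = ((m - t : ℕ) : ZMod m) := by
  rw [neg_eq_iff_add_eq_zero, ← Nat.cast_add, Nat.add_sub_cancel' ht, ZMod.natCast_self]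

section
variable (n : ℤ) {a b : ℕ}

lemma gA (ha : 0 < a) (hab : a < b) :
    bandEntry n (a + b) a (-(a : ZMod (a + b))) = T 1 * sgn n := by
  unfold bandEntry
  rw [if_pos rfl]

lemma gLow (ha : 0 < a) (hab : a < b) {k : ℕ} (h1 : 1 ≤ k) (h2 : k < a) :
    bandEntry n (a + b) a (-(k : ZMod (a + b))) = 1 + T 1 * sgn n := by
  unfold bandEntry
  rw [if_neg, if_pos]
  · exact ⟨k, by simp only [Finset.mem_Ico]; omega, rfl⟩
  · intro h
    rw [neg_inj, cast_inj' (by omega) (by omega)] at h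
    omega

lemma gMid (ha : 0 < a) (hab : a < b) {k : ℕ} (h1 : a < k) (h2 : k < b) :
    bandEntry n (a + b) a (-(k : ZMod (a + b))) = 0 := by
  unfold bandEntry
  rw [if_neg, if_neg, if_neg, if_neg, if_neg]
  · intro h
    rw [neg_cast' (by omega : k ≤ a + b), cast_inj' (by omega) (by omega)] at h
    omega
  · rintro ⟨t, ht, he⟩
    rw [Finset.mem_Ico] at ht
    rw [neg_cast' (by omega : k ≤ a + b), cast_inj' (by omega) (by omega)] at he
    omega
  · intro h
    rw [neg_eq_zero, ZMod.natCast_eq_zero_iff] at h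
    have := Nat.le_of_dvd (by omega) h
    omega
  · rintro ⟨t, ht, he⟩
    rw [Finset.mem_Ico] at ht
    rw [neg_inj, cast_inj' (by omega) (by omega)] at he
    omega
  · intro h
    rw [neg_inj, cast_inj' (by omega) (by omega)] at h
    omega

lemma gB (ha : 0 < a) (hab : a < b) :
    bandEntry n (a + b) a (-(b : ZMod (a + b))) = -1 := by
  unfold bandEntry
  rw [if_neg, if_neg, if_neg, if_neg, if_pos]
  · rw [neg_cast' (by omega : b ≤ a + b)]
    congr 1
    omega
  · rintro ⟨t, ht, he⟩
    rw [Finset.mem_Ico] at ht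
    rw [neg_cast' (by omega : b ≤ a + b), cast_inj' (by omega) (by omega)] at he
    omega
  · intro h
    rw [neg_eq_zero, ZMod.natCast_eq_zero_iff] at h
    have := Nat.le_of_dvd (by omega) h
    omega
  · rintro ⟨t, ht, he⟩
    rw [Finset.mem_Ico] at ht
    rw [neg_inj, cast_inj' (by omega) (by omega)] at he
    omega
  · intro h
    rw [neg_inj, cast_inj' (by omega) (by omega)] at h
    omega

lemma gHigh (ha : 0 < a) (hab : a < b) {k : ℕ} (h1 : b < k) (h2 : k < a + b) :
    bandEntry n (a + b) a (-(k : ZMod (a + b))) = -1 - T 1 * sgn n := by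
  unfold bandEntry
  rw [if_neg, if_neg, if_neg, if_pos]
  · refine ⟨a + b - k, by simp only [Finset.mem_Ico]; omega, ?_⟩
    rw [neg_cast' (by omega : k ≤ a + b)]
  · intro h
    rw [neg_eq_zero, ZMod.natCast_eq_zero_iff] at h
    have := Nat.le_of_dvd (by omega) h
    omega
  · rintro ⟨t, ht, he⟩
    rw [Finset.mem_Ico] at ht
    rw [neg_inj, cast_inj' (by omega) (by omega)] at he
    omega
  · intro h
    rw [neg_inj, cast_inj' (by omega) (by omega)] at h
    omega

lemma sum_reflect_id (c : ℕ) : ∑ j ∈ Finset.range c, (c - 1 - j) = ∑ j ∈ Finset.range c, j := by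
  simpa using Finset.sum_range_reflect (fun j => j) c

lemma coef1 {a b : ℕ} (ha : 0 < a) (hab : a < b) :
    ∑ r ∈ Finset.range (a - 1), (a + b - 1 - r)
      = (a - 1) * (b + 1) + ∑ j ∈ Finset.range (a - 1), j := by
  have h1 : ∑ r ∈ Finset.range (a - 1), (a + b - 1 - r)
      = ∑ r ∈ Finset.range (a - 1), ((b + 1) + (a - 1 - 1 - r)) := by
    refine Finset.sum_congr rfl fun r hr => ?_
    rw [Finset.mem_range] at hr
    omega
  rw [h1, Finset.sum_add_distrib, Finset.sum_const, Finset.card_range, smul_eq_mul,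
    sum_reflect_id]

lemma coef5 {a b : ℕ} (ha : 0 < a) (hab : a < b) :
    ∑ r ∈ Finset.Ico b (a + b), (a + b - 1 - r)
      = ∑ j ∈ Finset.range (a - 1), j + (a - 1) := by
  rw [Finset.sum_Ico_eq_sum_range, show a + b - b = a from by omega]
  have h1 : ∑ j ∈ Finset.range a, (a + b - 1 - (b + j))
      = ∑ j ∈ Finset.range a, (a - 1 - j) := by
    refine Finset.sum_congr rfl fun j hj => ?_
    rw [Finset.mem_range] at hj
    omega
  rw [h1, sum_reflect_id]
  conv_lhs => rw [show a = (a - 1) + 1 from by omega, Finset.sum_range_succ]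

lemma Ico_single {x y : ℕ} (h : y = x + 1) : Finset.Ico x y = {x} := by
  subst h
  exact Nat.Ico_succ_singleton x

noncomputable def gg (n : ℤ) (a b : ℕ) (k : ℕ) : LaurentPolynomial ℤ :=
  bandEntry n (a + b) a (-(k : ZMod (a + b)))

lemma key_sum (ha : 0 < a) (hab : a < b)
    (B A : Matrix (Fin (a + b)) (Fin (a + b)) (LaurentPolynomial ℤ))
    (hB : ∀ i j : Fin (a + b),
      B i j = bandEntry n (a + b) a ((i : ZMod (a + b)) - (j : ZMod (a + b))))
    (hA : ∀ i j : Fin (a + b),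
      A i j = if i < j then B i j else if i = j then 1 else 0) :
    ∑ i : Fin (a + b), ∑ j : Fin (a + b), A i j
      = (a * b) • (1 + T 1 * sgn n) := by
  classical
  -- pointwise split of A
  have hsplit : ∀ i j : Fin (a + b), A i j
      = (if i < j then B i j else 0) + (if i = j then 1 else 0) := by
    intro i j
    rw [hA i j]
    rcases lt_trichotomy i j with h | h | h
    · simp [h, h.ne]
    · subst h
      simp
    · simp [h.ne', not_lt.mpr h.le]
  simp only [hsplit, Finset.sum_add_distrib]
  -- diagonal part
  have hdiag : ∑ i : Fin (a + b), ∑ j : Fin (a + b),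
      (if i = j then (1 : LaurentPolynomial ℤ) else 0)
      = ((a + b : ℕ) : LaurentPolynomial ℤ) := by
    have h1 : ∀ i : Fin (a + b), ∑ j : Fin (a + b),
        (if i = j then (1 : LaurentPolynomial ℤ) else 0) = 1 := by
      intro i
      rw [Finset.sum_ite_eq]
      simp
    rw [Finset.sum_congr rfl fun i _ => h1 i, Finset.sum_const, Finset.card_univ,
      Fintype.card_fin, nsmul_eq_mul, mul_one]
  rw [hdiag]
  -- upper triangular part: reindex
  have hBval : ∀ i j : Fin (a + b), i < j → B i j = gg n a b (j.val - i.val) := by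
    intro i j h
    have hv : i.val < j.val := h
    rw [hB]
    unfold gg
    congr 1
    have hij : ((j.val : ℕ) : ZMod (a + b)) = ((i.val : ℕ) : ZMod (a + b))
        + (((j.val - i.val : ℕ)) : ZMod (a + b)) := by
      rw [← Nat.cast_add, Nat.add_sub_cancel' (Nat.le_of_lt hv)]
    show ((i.val : ℕ) : ZMod (a + b)) - ((j.val : ℕ) : ZMod (a + b)) = _
    rw [hij]
    ring
  have hF : ∀ i j : Fin (a + b), (if i < j then B i j else 0)
      = (fun x y : ℕ => if x < y then gg n a b (y - x) else 0) i.val j.val := by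
    intro i j
    show (if i < j then B i j else 0)
      = (if i.val < j.val then gg n a b (j.val - i.val) else 0)
    by_cases h : i.val < j.val
    · rw [if_pos (show i < j from h), if_pos h, hBval i j h]
    · rw [if_neg (show ¬ i < j from h), if_neg h]
  simp only [hF]
  have hrange : ∑ i : Fin (a + b), ∑ j : Fin (a + b),
        (fun x y : ℕ => if x < y then gg n a b (y - x) else 0) i.val j.val
      = ∑ i ∈ Finset.range (a + b), ∑ j ∈ Finset.range (a + b),
        (if i < j then gg n a b (j - i) else 0) := by
    rw [← Fin.sum_univ_eq_sum_range (fun i => ∑ j ∈ Finset.range (a + b),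
      (if i < j then gg n a b (j - i) else 0)) (a + b)]
    exact Finset.sum_congr rfl fun i _ =>
      Fin.sum_univ_eq_sum_range (fun j => if i.val < j then gg n a b (j - i.val) else 0) (a + b)
  rw [hrange]
  -- inner sum
  have hinner : ∀ i ∈ Finset.range (a + b),
      (∑ j ∈ Finset.range (a + b), (if i < j then gg n a b (j - i) else 0))
      = ∑ t ∈ Finset.range (a + b - 1 - i), gg n a b (t + 1) := by
    intro i hi
    rw [Finset.mem_range] at hi
    conv_lhs => rw [Finset.range_eq_Ico]
    rw [← Finset.sum_Ico_consecutive _ (Nat.zero_le (i + 1)) (by omega : i + 1 ≤ a + b),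
      Finset.sum_eq_zero (fun j hj => by
        rw [Finset.mem_Ico] at hj
        exact if_neg (by omega)),
      zero_add, Finset.sum_Ico_eq_sum_range]
    refine Finset.sum_congr (by rw [show a + b - (i + 1) = a + b - 1 - i from by omega]) fun t ht => ?_
    rw [Finset.mem_range] at ht
    rw [if_pos (by omega), show i + 1 + t - i = t + 1 from by omega]
  rw [Finset.sum_congr rfl hinner]
  have hrefl : ∑ i ∈ Finset.range (a + b), ∑ t ∈ Finset.range (a + b - 1 - i), gg n a b (t + 1)
      = ∑ i ∈ Finset.range (a + b), ∑ t ∈ Finset.range i, gg n a b (t + 1) :=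
    Finset.sum_range_reflect (fun s => ∑ t ∈ Finset.range s, gg n a b (t + 1)) (a + b)
  rw [hrefl, aux_swap (fun t => gg n a b (t + 1)) (a + b)]
  -- split the range into five pieces
  rw [Finset.range_eq_Ico,
    ← Finset.sum_Ico_consecutive _ (Nat.zero_le (a - 1)) (show a - 1 ≤ a + b from by omega),
    ← Finset.sum_Ico_consecutive _ (show a - 1 ≤ a from by omega) (show a ≤ a + b from by omega),
    ← Finset.sum_Ico_consecutive _ (show a ≤ b - 1 from by omega) (show b - 1 ≤ a + b from by omega),
    ← Finset.sum_Ico_consecutive _ (show b - 1 ≤ b from by omega) (show b ≤ a + b from by omega)]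
  have P1 : ∑ r ∈ Finset.Ico 0 (a - 1), (a + b - 1 - r) • gg n a b (r + 1)
      = (∑ r ∈ Finset.range (a - 1), (a + b - 1 - r)) • (1 + T 1 * sgn n) := by
    rw [← Finset.range_eq_Ico, Finset.sum_smul]
    refine Finset.sum_congr rfl fun r hr => ?_
    rw [Finset.mem_range] at hr
    unfold gg
    rw [gLow n ha hab (by omega) (by omega)]
  have P2 : ∑ r ∈ Finset.Ico (a - 1) a, (a + b - 1 - r) • gg n a b (r + 1)
      = b • (T 1 * sgn n) := by
    rw [Ico_single (show a = (a - 1) + 1 from by omega), Finset.sum_singleton,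
      show a - 1 + 1 = a from by omega, show a + b - 1 - (a - 1) = b from by omega]
    unfold gg
    rw [gA n ha hab]
  have P3 : ∑ r ∈ Finset.Ico a (b - 1), (a + b - 1 - r) • gg n a b (r + 1) = 0 := by
    refine Finset.sum_eq_zero fun r hr => ?_
    rw [Finset.mem_Ico] at hr
    unfold gg
    rw [gMid n ha hab (by omega) (by omega), smul_zero]
  have P4 : ∑ r ∈ Finset.Ico (b - 1) b, (a + b - 1 - r) • gg n a b (r + 1)
      = a • (-1 : LaurentPolynomial ℤ) := by
    rw [Ico_single (show b = (b - 1) + 1 from by omega), Finset.sum_singleton,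
      show b - 1 + 1 = b from by omega, show a + b - 1 - (b - 1) = a from by omega]
    unfold gg
    rw [gB n ha hab]
  have P5 : ∑ r ∈ Finset.Ico b (a + b), (a + b - 1 - r) • gg n a b (r + 1)
      = (∑ r ∈ Finset.Ico b (a + b), (a + b - 1 - r)) • (-1 - T 1 * sgn n) := by
    rw [Finset.sum_smul]
    refine Finset.sum_congr rfl fun r hr => ?_
    rw [Finset.mem_Ico] at hr
    by_cases hr2 : r + 1 < a + b
    · unfold gg
      rw [gHigh n ha hab (by omega) hr2]
    · rw [show a + b - 1 - r = 0 from by omega, zero_smul, zero_smul]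
  rw [P1, P2, P3, P4, P5, coef1 ha hab, coef5 ha hab]
  simp only [nsmul_eq_mul]
  push_cast [Nat.cast_sub (show 1 ≤ a from ha)]
  ring
end

/-- For the cyclic band matrix `B` and its unit upper triangular part `A`,
and `h = (1,…,1)`, one has `(f h)ᵀ^* A (f h) = f^* f · ab · (1 + q(−1)ⁿ)`. -/
theorem stmt7 (n : ℤ) (a b : ℕ) (ha : 0 < a) (hab : a < b) (hcop : Nat.Coprime a b)
    (B A : Matrix (Fin (a + b)) (Fin (a + b)) (LaurentPolynomial ℤ))
    (hB : ∀ i j : Fin (a + b),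
      B i j = bandEntry n (a + b) a ((i : ZMod (a + b)) - (j : ZMod (a + b))))
    (hA : ∀ i j : Fin (a + b),
      A i j = if i < j then B i j else if i = j then 1 else 0)
    (f : LaurentPolynomial ℤ) :
    pairL A (fun _ => f) (fun _ => f) =
      invert f * f * ((a : LaurentPolynomial ℤ) * (b : LaurentPolynomial ℤ)) *
        (1 + T 1 * sgn n) := by
  simp only [pairL, Matrix.mulVec, dotProduct]
  have step : ∀ i : Fin (a + b), invert f * (∑ j : Fin (a + b), A i j * f)
      = ∑ j : Fin (a + b), (invert f * f) * A i j := by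
    intro i
    rw [Finset.mul_sum]
    exact Finset.sum_congr rfl fun j _ => by ring
  rw [Finset.sum_congr rfl fun i _ => step i]
  simp only [← Finset.mul_sum]
  rw [key_sum n ha hab B A hB hA, nsmul_eq_mul]
  push_cast
  ring
end

section
/- Fix n ∈ ℤ, ε = (−1)ⁿ. Consider the cyclic q-intersection data on ℤ[q,q⁻¹]^{a+b} given by σ(i,j) for i,j ∈ ℤ/(a+b): σ(i,i) = 1 − qε, σ(i, i−1) = −1, σ(i, i+1) = qε, and σ(i,j) = 0 otherwise (a matrix S with S_{ij} = σ(i,j)). For coprime 0 < a < b and each i ∈ ℤ/(a+b), define v^i = Σ_{s=0}^{a−1} e^{i+s} as a formal sum of basis vectors, and set B_{ij} = Σ_{s=0}^{a−1} Σ_{t=0}^{a−1} σ(i+s, j+t). Then B_{ij} depends only on i−j mod (a+b) and equals: qε if i−j ≡ −a; 1+qε if i−j ≡ −a+1,…,−1; 1−qε if i=j; −1−qε if i−j ≡ 1,…,a−1; −1 if i−j ≡ a; and 0 otherwise. -/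
open LaurentPolynomial Matrix

/-- The cyclic q-intersection pairing `σ(i,j)` of the spheres `Σⁱ`, as a
function of `d = i − j ∈ ℤ/m`: `1 − qε` if `d = 0`, `−1` if `d = 1`,
`qε` if `d = −1`, and `0` otherwise. -/
noncomputable def sigEntry (n : ℤ) (m : ℕ) (d : ZMod m) : LaurentPolynomial ℤ :=
  if d = 0 then 1 - T 1 * sgn n
  else if d = 1 then -1
  else if d = -1 then T 1 * sgn n
  else 0

lemma sigEntry_eq (n : ℤ) (m : ℕ) (hm : 3 ≤ m) (d : ZMod m) :
    sigEntry n m d = ((if d = 0 then 1 else 0) - (if d = 1 then 1 else 0))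
      + T 1 * sgn n * ((if d = -1 then 1 else 0) - (if d = 0 then 1 else 0)) := by
  have key : ∀ x : ℕ, x < m → 0 < x → ((x:ℕ) : ZMod m) ≠ 0 := fun x hx hx0 h =>
    absurd (Nat.eq_zero_of_dvd_of_lt ((ZMod.natCast_eq_zero_iff x m).mp h) hx)
      (by omega)
  have h01 : (0 : ZMod m) ≠ 1 := fun h => key 1 (by omega) one_pos (by exact_mod_cast h.symm)
  have h0m1 : (0 : ZMod m) ≠ -1 := by
    intro h
    exact key 1 (by omega) one_pos (by push_cast; linear_combination h)
  have h1m1 : (1 : ZMod m) ≠ -1 := by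
    intro h
    exact key 2 (by omega) two_pos (by push_cast; linear_combination h)
  by_cases h0 : d = 0
  · subst h0; simp [sigEntry, h01, h0m1]; ring
  · by_cases h1 : d = 1
    · subst h1; simp [sigEntry, h01.symm, h1m1]
    · by_cases h2 : d = -1
      · subst h2; simp [sigEntry, h0m1.symm, h1m1.symm]
      · simp [sigEntry, h0, h1, h2]

lemma sigInner (n : ℤ) (m : ℕ) (hm : 3 ≤ m) (a : ℕ) (x : ZMod m) :
    ∑ t ∈ Finset.range a, sigEntry n m (x - (t : ZMod m)) =
      ((if x = 0 then 1 else 0) - (if x = (a : ZMod m) then 1 else 0))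
      + T 1 * sgn n *
        ((if x = -1 then 1 else 0) - (if x = (a : ZMod m) - 1 then 1 else 0)) := by
  have key : ∀ t : ℕ, sigEntry n m (x - (t : ZMod m)) =
      ((if x = (t : ZMod m) then (1 : LaurentPolynomial ℤ) else 0)
        - (if x = ((t+1 : ℕ) : ZMod m) then 1 else 0))
      + T 1 * sgn n *
        ((if x = ((t : ZMod m)) - 1 then 1 else 0)
          - (if x = ((t+1 : ℕ) : ZMod m) - 1 then 1 else 0)) := by
    intro t
    rw [sigEntry_eq n m hm]
    have e0 : (x - (t : ZMod m) = 0) ↔ (x = (t : ZMod m)) := sub_eq_zero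
    have e1 : (x - (t : ZMod m) = 1) ↔ (x = ((t+1 : ℕ) : ZMod m)) := by
      push_cast; constructor <;> intro h <;> linear_combination h
    have e2 : (x - (t : ZMod m) = -1) ↔ (x = (t : ZMod m) - 1) := by
      constructor <;> intro h <;> linear_combination h
    have e3 : (x = ((t+1 : ℕ) : ZMod m) - 1) ↔ (x = (t : ZMod m)) := by
      push_cast; constructor <;> intro h <;> linear_combination h
    simp only [e0, e1, e2, e3]
  rw [Finset.sum_congr rfl fun t _ => key t, Finset.sum_add_distrib, ← Finset.mul_sum,
    Finset.sum_range_sub' (fun t => if x = (t : ZMod m) then (1 : LaurentPolynomial ℤ) else 0),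
    Finset.sum_range_sub' (fun t => if x = ((t : ZMod m)) - 1 then (1 : LaurentPolynomial ℤ) else 0)]
  norm_num

lemma sigOuter (m a : ℕ) (ha : a ≤ m) (hm : 0 < m) (d c : ZMod m) :
    ∑ s ∈ Finset.range a, (if d + (s : ZMod m) = c then (1 : LaurentPolynomial ℤ) else 0) =
      if ∃ s ∈ Finset.range a, d = c - (s : ZMod m) then 1 else 0 := by
  by_cases hex : ∃ s ∈ Finset.range a, d = c - (s : ZMod m)
  · obtain ⟨s₀, hs₀, hd⟩ := hex
    rw [if_pos ⟨s₀, hs₀, hd⟩, Finset.sum_eq_single s₀]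
    · rw [if_pos (by rw [hd]; ring)]
    · intro s hs hne
      rw [if_neg]
      intro h
      apply hne
      have h1 : (s : ZMod m) = (s₀ : ZMod m) := by
        have : d = c - (s : ZMod m) := by linear_combination h
        linear_combination this - hd
      have hs' : s < m := lt_of_lt_of_le (Finset.mem_range.mp hs) ha
      have hs₀' : s₀ < m := lt_of_lt_of_le (Finset.mem_range.mp hs₀) ha
      have := congrArg ZMod.val h1
      rwa [ZMod.val_cast_of_lt hs', ZMod.val_cast_of_lt hs₀'] at this
    · intro h; exact absurd hs₀ h
  · rw [if_neg hex]
    refine Finset.sum_eq_zero fun s hs => ?_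
    rw [if_neg fun h => hex ⟨s, hs, by linear_combination h⟩]

lemma cond_iff {m : ℕ} (hm : 0 < m) {k : ℕ} (hk : k < m) {c : ℤ} (h1 : -(m:ℤ) < c) (h2 : c < m) :
    ((k : ZMod m) = (c : ZMod m)) ↔ ((k:ℤ) = c ∨ (k:ℤ) = c + m) := by
  constructor
  · intro h
    have h' : ((k:ℤ) : ZMod m) = (c : ZMod m) := by push_cast; exact_mod_cast h
    have hd : (m:ℤ) ∣ c - k := Int.ModEq.dvd ((ZMod.intCast_eq_intCast_iff _ _ _).mp h')
    obtain ⟨e, he⟩ := hd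
    have hm' : (0:ℤ) < m := by exact_mod_cast hm
    have hk' : (k:ℤ) < m := by exact_mod_cast hk
    have hk0 : (0:ℤ) ≤ k := Int.natCast_nonneg k
    have he1 : -2 < e := by nlinarith
    have he2 : e < 1 := by nlinarith
    interval_cases e <;> omega
  · rintro (h | h)
    · exact_mod_cast congrArg (Int.cast : ℤ → ZMod m) h
    · have : ((k:ℤ) : ZMod m) = ((c + m : ℤ) : ZMod m) := congrArg _ h
      push_cast [ZMod.natCast_self] at this ⊢
      simpa using this

lemma zmod_eq_iff {m : ℕ} (hm : 0 < m) {k : ℕ} (hk : k < m) {E : ZMod m} {c : ℤ}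
    (hE : E = ((c:ℤ) : ZMod m)) (h1 : -(m:ℤ) < c) (h2 : c < m) :
    ((k : ZMod m) = E) ↔ ((k:ℤ) = c ∨ (k:ℤ) = c + m) := by
  rw [hE]; exact cond_iff hm hk h1 h2

set_option maxHeartbeats 2000000 in
lemma main_char (n : ℤ) (a b : ℕ) (ha : 0 < a) (hab : a < b) (k : ℕ) (hk : k < a + b) :
    ((if ∃ s ∈ Finset.range a, ((k:ℕ) : ZMod (a+b)) = 0 - (s : ZMod (a+b)) then (1 : LaurentPolynomial ℤ) else 0)
      - (if ∃ s ∈ Finset.range a, ((k:ℕ) : ZMod (a+b)) = (a : ZMod (a+b)) - (s : ZMod (a+b)) then 1 else 0))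
    + T 1 * sgn n *
      ((if ∃ s ∈ Finset.range a, ((k:ℕ) : ZMod (a+b)) = -1 - (s : ZMod (a+b)) then 1 else 0)
        - (if ∃ s ∈ Finset.range a, ((k:ℕ) : ZMod (a+b)) = (a : ZMod (a+b)) - 1 - (s : ZMod (a+b)) then 1 else 0))
    = bandEntry n (a+b) a ((k:ℕ) : ZMod (a+b)) := by
  have hm0 : 0 < a + b := by omega
  have hC1 : (∃ s ∈ Finset.range a, ((k:ℕ) : ZMod (a+b)) = 0 - (s : ZMod (a+b))) ↔ (k = 0 ∨ b < k) := by
    constructor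
    · rintro ⟨s, hs, h⟩
      rw [Finset.mem_range] at hs
      rw [zmod_eq_iff hm0 hk (c := 0 - (s:ℤ)) (by push_cast; ring) (by omega) (by omega)] at h
      omega
    · intro h
      by_cases h0 : k = 0
      · exact ⟨0, Finset.mem_range.mpr ha, by
          rw [zmod_eq_iff hm0 hk (c := 0 - ((0:ℕ):ℤ)) (by push_cast; ring) (by omega) (by omega)]
          omega⟩
      · refine ⟨a + b - k, Finset.mem_range.mpr (by omega), ?_⟩
        rw [zmod_eq_iff hm0 hk (c := 0 - ((a + b - k : ℕ):ℤ)) (by push_cast; ring) (by omega) (by omega)]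
        omega
  have hC2 : (∃ s ∈ Finset.range a, ((k:ℕ) : ZMod (a+b)) = (a : ZMod (a+b)) - (s : ZMod (a+b))) ↔ (1 ≤ k ∧ k ≤ a) := by
    constructor
    · rintro ⟨s, hs, h⟩
      rw [Finset.mem_range] at hs
      rw [zmod_eq_iff hm0 hk (c := (a:ℤ) - (s:ℤ)) (by push_cast; ring) (by omega) (by omega)] at h
      omega
    · intro h
      refine ⟨a - k, Finset.mem_range.mpr (by omega), ?_⟩
      rw [zmod_eq_iff hm0 hk (c := (a:ℤ) - ((a - k : ℕ):ℤ)) (by push_cast; ring) (by omega) (by omega)]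
      omega
  have hC3 : (∃ s ∈ Finset.range a, ((k:ℕ) : ZMod (a+b)) = -1 - (s : ZMod (a+b))) ↔ (b ≤ k) := by
    constructor
    · rintro ⟨s, hs, h⟩
      rw [Finset.mem_range] at hs
      rw [zmod_eq_iff hm0 hk (c := -1 - (s:ℤ)) (by push_cast; ring) (by omega) (by omega)] at h
      omega
    · intro h
      refine ⟨a + b - 1 - k, Finset.mem_range.mpr (by omega), ?_⟩
      rw [zmod_eq_iff hm0 hk (c := -1 - ((a + b - 1 - k : ℕ):ℤ)) (by push_cast; ring) (by omega) (by omega)]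
      omega
  have hC4 : (∃ s ∈ Finset.range a, ((k:ℕ) : ZMod (a+b)) = (a : ZMod (a+b)) - 1 - (s : ZMod (a+b))) ↔ (k < a) := by
    constructor
    · rintro ⟨s, hs, h⟩
      rw [Finset.mem_range] at hs
      rw [zmod_eq_iff hm0 hk (c := (a:ℤ) - 1 - (s:ℤ)) (by push_cast; ring) (by omega) (by omega)] at h
      omega
    · intro h
      refine ⟨a - 1 - k, Finset.mem_range.mpr (by omega), ?_⟩
      rw [zmod_eq_iff hm0 hk (c := (a:ℤ) - 1 - ((a - 1 - k : ℕ):ℤ)) (by push_cast; ring) (by omega) (by omega)]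
      omega
  have hB1 : (((k:ℕ) : ZMod (a+b)) = -(a : ZMod (a+b))) ↔ (k = b) := by
    rw [zmod_eq_iff hm0 hk (c := -(a:ℤ)) (by push_cast; ring) (by omega) (by omega)]
    omega
  have hB2 : (∃ t ∈ Finset.Ico 1 a, ((k:ℕ) : ZMod (a+b)) = -(t : ZMod (a+b))) ↔ (b < k) := by
    constructor
    · rintro ⟨t, ht, h⟩
      rw [Finset.mem_Ico] at ht
      rw [zmod_eq_iff hm0 hk (c := -(t:ℤ)) (by push_cast; ring) (by omega) (by omega)] at h
      omega
    · intro h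
      refine ⟨a + b - k, Finset.mem_Ico.mpr (by omega), ?_⟩
      rw [zmod_eq_iff hm0 hk (c := -((a + b - k : ℕ):ℤ)) (by push_cast; ring) (by omega) (by omega)]
      omega
  have hB3 : (((k:ℕ) : ZMod (a+b)) = 0) ↔ (k = 0) := by
    rw [zmod_eq_iff hm0 hk (c := 0) (by push_cast; ring) (by omega) (by omega)]
    omega
  have hB4 : (∃ t ∈ Finset.Ico 1 a, ((k:ℕ) : ZMod (a+b)) = (t : ZMod (a+b))) ↔ (1 ≤ k ∧ k < a) := by
    constructor
    · rintro ⟨t, ht, h⟩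
      rw [Finset.mem_Ico] at ht
      rw [zmod_eq_iff hm0 hk (c := (t:ℤ)) (by push_cast; ring) (by omega) (by omega)] at h
      omega
    · intro h
      refine ⟨k, Finset.mem_Ico.mpr (by omega), ?_⟩
      rw [zmod_eq_iff hm0 hk (c := (k:ℤ)) (by push_cast; ring) (by omega) (by omega)]
      omega
  have hB5 : (((k:ℕ) : ZMod (a+b)) = (a : ZMod (a+b))) ↔ (k = a) := by
    rw [zmod_eq_iff hm0 hk (c := (a:ℤ)) (by push_cast; ring) (by omega) (by omega)]
    omega
  rw [bandEntry]
  simp only [hC1, hC2, hC3, hC4, hB1, hB2, hB3, hB4, hB5]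
  split_ifs <;> first | ring1 | omega | (exfalso; omega)

/-- The double sum `B_{ij} = Σ_{s,t < a} σ(i+s, j+t)` depends only on `i − j`
mod `a+b` and equals the cyclic band matrix entry. -/
theorem stmt12 (n : ℤ) (a b : ℕ) (ha : 0 < a) (hab : a < b) (hcop : Nat.Coprime a b) :
    ∀ i j : ZMod (a + b),
      (∑ s ∈ Finset.range a, ∑ t ∈ Finset.range a,
        sigEntry n (a + b) ((i + (s : ZMod (a + b))) - (j + (t : ZMod (a + b))))) =
      bandEntry n (a + b) a (i - j) := by
  intro i j
  have hm3 : 3 ≤ a + b := by omega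
  have hm0 : 0 < a + b := by omega
  haveI : NeZero (a + b) := ⟨by omega⟩
  have step : (∑ s ∈ Finset.range a, ∑ t ∈ Finset.range a,
        sigEntry n (a + b) ((i + (s : ZMod (a + b))) - (j + (t : ZMod (a + b)))))
      = ∑ s ∈ Finset.range a,
        (((if (i - j) + (s : ZMod (a+b)) = 0 then (1 : LaurentPolynomial ℤ) else 0)
          - (if (i - j) + (s : ZMod (a+b)) = (a : ZMod (a+b)) then 1 else 0))
        + T 1 * sgn n *
          ((if (i - j) + (s : ZMod (a+b)) = -1 then 1 else 0)
            - (if (i - j) + (s : ZMod (a+b)) = (a : ZMod (a+b)) - 1 then 1 else 0))) := by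
    refine Finset.sum_congr rfl fun s _ => ?_
    calc ∑ t ∈ Finset.range a, sigEntry n (a + b) ((i + (s : ZMod (a + b))) - (j + (t : ZMod (a + b))))
        = ∑ t ∈ Finset.range a, sigEntry n (a + b) (((i - j) + (s : ZMod (a+b))) - (t : ZMod (a + b))) :=
          Finset.sum_congr rfl fun t _ => by ring_nf
      _ = _ := sigInner n (a+b) hm3 a ((i - j) + (s : ZMod (a+b)))
  rw [step, Finset.sum_add_distrib, ← Finset.mul_sum, Finset.sum_sub_distrib,
    Finset.sum_sub_distrib,
    sigOuter (a+b) a (by omega) hm0 (i - j) 0,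
    sigOuter (a+b) a (by omega) hm0 (i - j) ((a : ZMod (a+b))),
    sigOuter (a+b) a (by omega) hm0 (i - j) (-1),
    sigOuter (a+b) a (by omega) hm0 (i - j) ((a : ZMod (a+b)) - 1)]
  have hd : (((i - j).val : ℕ) : ZMod (a+b)) = i - j := by
    rw [ZMod.natCast_val, ZMod.cast_id]
  rw [← hd]
  exact main_char n a b ha hab (i - j).val (ZMod.val_lt _)
end

section
/- Let n be odd and let a,b,m be as follows: 0 < a < b coprime, m = a+b. Let B_q be the cyclic band matrix over ℚ(q) (rational functions) with B_{ij} = −q if i−j ≡ −a mod m; 1−q if i−j ≡ −a+1,…,−1 mod m; 1+q if i=j; q−1 if i−j ≡ 1,…,a−1 mod m; −1 if i−j ≡ a mod m; 0 otherwise. Then over ℚ(q), the kernel of B_q is one-dimensional, spanned by (1,1,…,1). -/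
open Matrix

open Polynomial Finset

/-- The entry of the cyclic band matrix (case `n` odd, `ε = −1`) over `ℚ(q)`, as
a function of the difference `d = i − j ∈ ℤ/m`. -/
noncomputable def band16 (m a : ℕ) (d : ZMod m) : RatFunc ℚ :=
  if d = -(a : ZMod m) then -RatFunc.X
  else if ∃ t ∈ Finset.Ico 1 a, d = -(t : ZMod m) then 1 - RatFunc.X
  else if d = 0 then 1 + RatFunc.X
  else if ∃ t ∈ Finset.Ico 1 a, d = (t : ZMod m) then RatFunc.X - 1
  else if d = (a : ZMod m) then -1
  else 0


section aux

variable {a b : ℕ}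

/-- polynomial version of the band entry, as a function of `val`. -/
noncomputable def F16 (a b : ℕ) (k : ℕ) : Polynomial ℚ :=
  if k = b then -Polynomial.X
  else if b < k then 1 - Polynomial.X
  else if k = 0 then 1 + Polynomial.X
  else if 1 ≤ k ∧ k < a then Polynomial.X - 1
  else if k = a then -1
  else 0

noncomputable def G16 (a b : ℕ) (k : ℕ) : ℚ :=
  if k = b then -1 else if k = 0 then 2 else if k = a then -1 else 0

lemma evalF16 (k : ℕ) (ha : 0 < a) (hab : a < b) :
    (F16 a b k).eval 1 = G16 a b k := by
  unfold F16 G16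
  split_ifs <;> first | omega | (simp <;> omega) | (simp <;> norm_num) | simp

lemma cast_inj16 {x y : ℕ} (hx : x < a + b) (hy : y < a + b) :
    ((x : ZMod (a + b)) = (y : ZMod (a + b))) ↔ x = y := by
  constructor
  · intro h
    have := congrArg ZMod.val h
    rwa [ZMod.val_cast_of_lt hx, ZMod.val_cast_of_lt hy] at this
  · rintro rfl; rfl

lemma cast_neg16 {x y : ℕ} (hx : x < a + b) (hy : y < a + b) (hpos : 0 < x + y) :
    ((x : ZMod (a + b)) = -(y : ZMod (a + b))) ↔ x + y = a + b := by
  rw [eq_neg_iff_add_eq_zero, ← Nat.cast_add, ZMod.natCast_eq_zero_iff]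
  constructor
  · intro h
    exact Nat.eq_of_dvd_of_lt_two_mul (by omega) h (by omega)
  · intro h; exact ⟨1, by omega⟩

end aux


section conds

variable {a b : ℕ} {k : ℕ}

lemma cond1 (ha : 0 < a) (hab : a < b) (hk : k < a + b) : ((k : ZMod (a+b)) = -(a : ZMod (a+b))) ↔ k = b := by
  rw [cast_neg16 hk (by omega) (by omega)]; omega

lemma cond2 (ha : 0 < a) (hab : a < b) (hk : k < a + b) : (∃ t ∈ Finset.Ico 1 a, (k : ZMod (a+b)) = -(t : ZMod (a+b))) ↔ b < k := by
  constructor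
  · rintro ⟨t, ht, h⟩
    rw [Finset.mem_Ico] at ht
    rw [cast_neg16 hk (by omega) (by omega)] at h
    omega
  · intro h
    refine ⟨a + b - k, Finset.mem_Ico.2 (by omega), ?_⟩
    rw [cast_neg16 hk (by omega) (by omega)]
    omega

lemma cond3 (ha : 0 < a) (hab : a < b) (hk : k < a + b) : ((k : ZMod (a+b)) = 0) ↔ k = 0 := by
  rw [show ((0 : ZMod (a+b)) = ((0 : ℕ) : ZMod (a+b))) by simp, cast_inj16 hk (by omega)]

lemma cond4 (ha : 0 < a) (hab : a < b) (hk : k < a + b) : (∃ t ∈ Finset.Ico 1 a, (k : ZMod (a+b)) = (t : ZMod (a+b))) ↔ 1 ≤ k ∧ k < a := by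
  constructor
  · rintro ⟨t, ht, h⟩
    rw [Finset.mem_Ico] at ht
    rw [cast_inj16 hk (by omega)] at h
    omega
  · intro h
    exact ⟨k, Finset.mem_Ico.2 (by omega), rfl⟩

lemma cond5 (ha : 0 < a) (hab : a < b) (hk : k < a + b) : ((k : ZMod (a+b)) = (a : ZMod (a+b))) ↔ k = a := by
  rw [cast_inj16 hk (by omega)]

lemma band_eq (ha : 0 < a) (hab : a < b) {k : ℕ} (hk : k < a + b) :
    band16 (a+b) a ((k : ℕ) : ZMod (a+b)) = algebraMap (Polynomial ℚ) (RatFunc ℚ) (F16 a b k) := by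
  rw [band16, F16]
  simp only [cond1 ha hab hk, cond2 ha hab hk, cond3 ha hab hk, cond4 ha hab hk, cond5 ha hab hk]
  split_ifs <;>
    simp [map_neg, map_sub, map_add, _root_.map_one, RatFunc.algebraMap_X]

end conds

def finZModEquiv (m : ℕ) [NeZero m] : Fin m ≃ ZMod m where
  toFun i := ((i : ℕ) : ZMod m)
  invFun d := ⟨d.val, d.val_lt⟩
  left_inv i := by
    ext
    exact ZMod.val_cast_of_lt i.isLt
  right_inv d := ZMod.natCast_rightInverse d

section rows

variable {a b : ℕ}

lemma band_eq' (ha : 0 < a) (hab : a < b) (d : ZMod (a + b)) :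
    band16 (a+b) a d = algebraMap (Polynomial ℚ) (RatFunc ℚ) (F16 a b d.val) := by
  haveI : NeZero (a + b) := ⟨by omega⟩
  conv_lhs => rw [← ZMod.natCast_rightInverse d]
  exact band_eq ha hab d.val_lt

lemma sumF16 (ha : 0 < a) (hab : a < b) :
    ∑ k ∈ Finset.range (a + b), F16 a b k = 0 := by
  rw [Finset.range_eq_Ico,
    ← Finset.sum_Ico_consecutive _ (by omega : 0 ≤ b + 1) (by omega : b + 1 ≤ a + b),
    ← Finset.sum_Ico_consecutive _ (by omega : 0 ≤ b) (by omega : b ≤ b + 1),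
    ← Finset.sum_Ico_consecutive _ (by omega : 0 ≤ a + 1) (by omega : a + 1 ≤ b),
    ← Finset.sum_Ico_consecutive _ (by omega : 0 ≤ a) (by omega : a ≤ a + 1),
    ← Finset.sum_Ico_consecutive _ (by omega : 0 ≤ 1) (by omega : 1 ≤ a)]
  have h0 : ∑ k ∈ Finset.Ico 0 1, F16 a b k = 1 + Polynomial.X := by
    rw [Nat.Ico_succ_singleton, Finset.sum_singleton]
    unfold F16; split_ifs <;> first | omega | rfl
  have h1 : ∑ k ∈ Finset.Ico 1 a, F16 a b k = (a - 1 : ℕ) • (Polynomial.X - 1) := by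
    rw [Finset.sum_congr rfl (fun k hk => ?_), Finset.sum_const, Nat.card_Ico]
    rw [Finset.mem_Ico] at hk
    unfold F16; split_ifs <;> first | omega | rfl
  have h2 : ∑ k ∈ Finset.Ico a (a+1), F16 a b k = -1 := by
    rw [Nat.Ico_succ_singleton, Finset.sum_singleton]
    unfold F16; split_ifs <;> first | omega | rfl
  have h3 : ∑ k ∈ Finset.Ico (a+1) b, F16 a b k = 0 := by
    rw [Finset.sum_congr rfl (fun k hk => ?_), Finset.sum_const, smul_zero]
    rw [Finset.mem_Ico] at hk
    unfold F16; split_ifs <;> first | omega | rfl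
  have h4 : ∑ k ∈ Finset.Ico b (b+1), F16 a b k = -Polynomial.X := by
    rw [Nat.Ico_succ_singleton, Finset.sum_singleton]
    unfold F16; split_ifs <;> first | omega | rfl
  have h5 : ∑ k ∈ Finset.Ico (b+1) (a+b), F16 a b k = (a - 1 : ℕ) • (1 - Polynomial.X) := by
    rw [Finset.sum_congr rfl (fun k hk => ?_), Finset.sum_const, Nat.card_Ico,
      show a + b - (b + 1) = a - 1 by omega]
    rw [Finset.mem_Ico] at hk
    unfold F16; split_ifs <;> first | omega | rfl
  rw [h0, h1, h2, h3, h4, h5]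
  have : ((a - 1 : ℕ) • (1 - Polynomial.X) : Polynomial ℚ) = -((a - 1 : ℕ) • (Polynomial.X - 1)) := by
    rw [← smul_neg]; ring_nf
  rw [this]
  ring_nf

end rows

section rows2

variable {a b : ℕ}

lemma rowsumF (ha : 0 < a) (hab : a < b) (ic : ZMod (a+b)) :
    ∑ j : Fin (a+b), F16 a b ((ic - ((j : ℕ) : ZMod (a+b))).val) = 0 := by
  haveI : NeZero (a+b) := ⟨by omega⟩
  let e := finZModEquiv (a+b)
  calc ∑ j : Fin (a+b), F16 a b ((ic - ((j:ℕ) : ZMod (a+b))).val)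
      = ∑ d : ZMod (a+b), F16 a b ((ic - d).val) :=
        Equiv.sum_comp e (fun d => F16 a b ((ic - d).val))
    _ = ∑ x : ZMod (a+b), F16 a b x.val :=
        Equiv.sum_comp (Equiv.subLeft ic) (fun x => F16 a b x.val)
    _ = ∑ j : Fin (a+b), F16 a b ((((j:ℕ) : ZMod (a+b))).val) :=
        (Equiv.sum_comp e (fun x => F16 a b x.val)).symm
    _ = ∑ j : Fin (a+b), F16 a b (j : ℕ) := by
        refine Finset.sum_congr rfl fun j _ => ?_
        rw [ZMod.val_cast_of_lt j.isLt]
    _ = ∑ k ∈ Finset.range (a+b), F16 a b k := Fin.sum_univ_eq_sum_range _ _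
    _ = 0 := sumF16 ha hab

lemma rowsumB (ha : 0 < a) (hab : a < b) (i : Fin (a+b)) :
    ∑ j : Fin (a+b), band16 (a+b) a (((i:ℕ) : ZMod (a+b)) - ((j:ℕ) : ZMod (a+b))) = 0 := by
  have : ∀ j : Fin (a+b), band16 (a+b) a (((i:ℕ) : ZMod (a+b)) - ((j:ℕ) : ZMod (a+b)))
      = algebraMap (Polynomial ℚ) (RatFunc ℚ)
          (F16 a b ((((i:ℕ) : ZMod (a+b)) - ((j:ℕ) : ZMod (a+b))).val)) :=
    fun j => band_eq' ha hab _
  simp only [this, ← map_sum, rowsumF ha hab, map_zero]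

end rows2

section ker

variable {a b : ℕ}

lemma ker1 (ha : 0 < a) (hab : a < b) (hcop : Nat.Coprime a b)
    (u : ZMod (a+b) → ℚ)
    (hu : ∀ i : ZMod (a+b), 2 * u i = u (i + (a:ZMod (a+b))) + u (i - (a:ZMod (a+b))))
    (h0 : u 0 = 0) : ∀ d, u d = 0 := by
  haveI : NeZero (a+b) := ⟨by omega⟩
  have step : ∀ k : ℕ, u (((k+1) * a : ℕ) : ZMod (a+b)) - u ((k * a : ℕ) : ZMod (a+b)) = u ((a : ℕ) : ZMod (a+b)) := by
    intro k
    induction k with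
    | zero => simp [h0]
    | succ k ih =>
      have h := hu (((k+1) * a : ℕ) : ZMod (a+b))
      have e1 : (((k+1) * a : ℕ) : ZMod (a+b)) + (a : ZMod (a+b)) = (((k+2) * a : ℕ) : ZMod (a+b)) := by
        push_cast; ring
      have e2 : (((k+1) * a : ℕ) : ZMod (a+b)) - (a : ZMod (a+b)) = ((k * a : ℕ) : ZMod (a+b)) := by
        push_cast; ring
      rw [e1, e2] at h
      rw [show k + 1 + 1 = k + 2 by omega]
      linarith [ih]
  have lin : ∀ k : ℕ, u ((k * a : ℕ) : ZMod (a+b)) = k * u ((a:ℕ) : ZMod (a+b)) := by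
    intro k
    induction k with
    | zero => simpa using h0
    | succ k ih =>
      have hs := step k
      push_cast at hs ih ⊢
      linarith
  have hua : u ((a:ℕ) : ZMod (a+b)) = 0 := by
    have h1 := lin (a+b)
    have h2 : (((a+b) * a : ℕ) : ZMod (a+b)) = 0 := by
      simp [Nat.cast_mul, ZMod.natCast_self]
    rw [h2, h0] at h1
    rcases mul_eq_zero.mp h1.symm with h | h
    · exact absurd h (Nat.cast_ne_zero.mpr (by omega))
    · exact h
  have hall : ∀ k : ℕ, u ((k * a : ℕ) : ZMod (a+b)) = 0 := by
    intro k; rw [lin k, hua, mul_zero]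
  intro d
  -- surjectivity of k ↦ k * a
  have hcop' : Nat.Coprime a (a + b) := by
    rw [add_comm]; exact Nat.coprime_add_self_right.mpr hcop
  let au : (ZMod (a+b))ˣ := ZMod.unitOfCoprime a hcop'
  have hau : (au : ZMod (a+b)) = ((a:ℕ) : ZMod (a+b)) := rfl
  set x : ZMod (a+b) := d * (au⁻¹ : (ZMod (a+b))ˣ) with hx
  have : d = x * ((a:ℕ) : ZMod (a+b)) := by
    rw [hx, ← hau, mul_assoc]
    simp
  have hd : ((x.val * a : ℕ) : ZMod (a+b)) = d := by
    push_cast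
    rw [ZMod.natCast_rightInverse x]
    exact this.symm
  rw [← hd]
  exact hall x.val

end ker

lemma Gval {a b : ℕ} (ha : 0 < a) (hab : a < b) (x : ZMod (a+b)) :
    G16 a b x.val = (if x = -((a:ℕ) : ZMod (a+b)) then (-1:ℚ) else 0)
      + (if x = 0 then 2 else 0) + (if x = ((a:ℕ) : ZMod (a+b)) then -1 else 0) := by
  haveI : NeZero (a+b) := ⟨by omega⟩
  obtain ⟨k, hklt, rfl⟩ : ∃ k : ℕ, k < a + b ∧ ((k : ZMod (a+b))) = x :=
    ⟨x.val, x.val_lt, ZMod.natCast_rightInverse x⟩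
  rw [ZMod.val_cast_of_lt hklt]
  simp only [cond1 ha hab hklt, cond3 ha hab hklt, cond5 ha hab hklt]
  unfold G16
  split_ifs <;> first | omega | norm_num

/-- For `n` odd and coprime `0 < a < b`, the kernel over `ℚ(q)` of the cyclic
band matrix `B_q` is one-dimensional, spanned by `(1,…,1)`. -/
theorem stmt16 (a b : ℕ) (ha : 0 < a) (hab : a < b) (hcop : Nat.Coprime a b)
    (B : Matrix (Fin (a + b)) (Fin (a + b)) (RatFunc ℚ))
    (hB : ∀ i j : Fin (a + b),
      B i j = band16 (a + b) a ((i : ZMod (a + b)) - (j : ZMod (a + b)))) :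
    ∀ v : Fin (a + b) → RatFunc ℚ,
      B.mulVec v = 0 ↔ ∃ c : RatFunc ℚ, v = fun _ => c := by
  haveI : NeZero (a+b) := ⟨by omega⟩
  intro v
  have hrow : ∀ i : Fin (a+b), ∑ j, B i j = 0 := by
    intro i
    simp only [hB]
    exact rowsumB ha hab i
  constructor
  · intro hv
    let e := finZModEquiv (a+b)
    set i₁ : Fin (a+b) := e.symm 0 with hi₁
    by_cases hw : ∀ i, v i = v i₁
    · exact ⟨v i₁, funext hw⟩
    exfalso
    push_neg at hw
    obtain ⟨i₀, hi₀⟩ := hw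
    set w : Fin (a+b) → RatFunc ℚ := fun i => v i - v i₁ with hwdef
    have hBw : ∀ i : Fin (a+b), ∑ j, B i j * w j = 0 := by
      intro i
      have h1 : ∑ j, B i j * v j = 0 := by
        have := congrFun hv i
        simpa [Matrix.mulVec, dotProduct] using this
      have h2 : ∑ j, B i j * v i₁ = 0 := by
        rw [← Finset.sum_mul, hrow i, zero_mul]
      simp only [hwdef, mul_sub, Finset.sum_sub_distrib, h1, h2, sub_zero]
    -- clear denominators
    obtain ⟨den, hden⟩ := IsLocalization.exist_integer_multiples
      (nonZeroDivisors (Polynomial ℚ)) Finset.univ w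
    choose p hp using fun i => hden i (Finset.mem_univ i)
    have hinj : Function.Injective (algebraMap (Polynomial ℚ) (RatFunc ℚ)) :=
      RatFunc.algebraMap_injective ℚ
    have hden0 : algebraMap (Polynomial ℚ) (RatFunc ℚ) (den : Polynomial ℚ) ≠ 0 := by
      rw [Ne, map_eq_zero_iff _ hinj]
      exact nonZeroDivisors.coe_ne_zero den
    have hpoly : ∀ i : Fin (a+b),
        ∑ j : Fin (a+b), F16 a b ((((i:ℕ):ZMod (a+b)) - ((j:ℕ):ZMod (a+b))).val) * p j = 0 := by
      intro i
      apply hinj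
      rw [map_sum, map_zero]
      calc ∑ j : Fin (a+b), algebraMap (Polynomial ℚ) (RatFunc ℚ)
              (F16 a b ((((i:ℕ):ZMod (a+b)) - ((j:ℕ):ZMod (a+b))).val) * p j)
          = ∑ j : Fin (a+b), algebraMap (Polynomial ℚ) (RatFunc ℚ) (den : Polynomial ℚ) * (B i j * w j) := by
            refine Finset.sum_congr rfl fun j _ => ?_
            rw [_root_.map_mul, hp j, hB i j, band_eq' ha hab, Algebra.smul_def]
            ring
        _ = algebraMap (Polynomial ℚ) (RatFunc ℚ) (den : Polynomial ℚ) * ∑ j : Fin (a+b), B i j * w j := by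
            rw [Finset.mul_sum]
        _ = 0 := by rw [hBw i, mul_zero]
    -- transport to ZMod
    set P : ZMod (a+b) → Polynomial ℚ := fun d => p (e.symm d) with hPdef
    have hPeq : ∀ ic : ZMod (a+b), ∑ d : ZMod (a+b), F16 a b ((ic - d).val) * P d = 0 := by
      intro ic
      have h := hpoly (e.symm ic)
      have he : (((e.symm ic : Fin (a+b)) : ℕ) : ZMod (a+b)) = ic := e.apply_symm_apply ic
      calc ∑ d : ZMod (a+b), F16 a b ((ic - d).val) * P d
          = ∑ j : Fin (a+b), F16 a b ((ic - e j).val) * P (e j) :=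
            (Equiv.sum_comp e (fun d => F16 a b ((ic - d).val) * P d)).symm
        _ = ∑ j : Fin (a+b), F16 a b ((((e.symm ic : Fin (a+b)) : ℕ) : ZMod (a+b))
              - ((j:ℕ) : ZMod (a+b))).val * p j := by
            refine Finset.sum_congr rfl fun j _ => ?_
            simp only [hPdef, he]
            rw [e.symm_apply_apply]
            rfl
        _ = 0 := h
    have hP0 : P 0 = 0 := by
      apply hinj
      rw [map_zero, hPdef]
      have : w i₁ = 0 := by simp [hwdef]
      have h := hp (e.symm 0)
      rw [← hi₁] at h
      rw [h, this, smul_zero]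
    have hPi₀ : P (e i₀) ≠ 0 := by
      rw [hPdef]
      simp only [e.symm_apply_apply]
      intro hz
      have h := hp i₀
      rw [hz, map_zero] at h
      have hw0 : w i₀ ≠ 0 := sub_ne_zero_of_ne hi₀
      rw [Algebra.smul_def] at h
      exact (mul_ne_zero hden0 hw0) h.symm
    -- minimal root multiplicity
    obtain ⟨d₁, hd₁mem, hd₁min⟩ := Finset.exists_min_image
      (Finset.univ.filter (fun d => P d ≠ 0)) (fun d => (P d).rootMultiplicity 1)
      ⟨e i₀, by simp [hPi₀]⟩
    have hd₁ne : P d₁ ≠ 0 := by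
      simpa using (Finset.mem_filter.mp hd₁mem).2
    set k := (P d₁).rootMultiplicity 1 with hk
    have hdvd : ∀ d, (Polynomial.X - Polynomial.C 1) ^ k ∣ P d := by
      intro d
      by_cases hPd : P d = 0
      · simp [hPd]
      · refine dvd_trans (pow_dvd_pow _ ?_) (Polynomial.pow_rootMultiplicity_dvd (P d) 1)
        exact hd₁min d (Finset.mem_filter.mpr ⟨Finset.mem_univ d, hPd⟩)
    choose Q hQ using hdvd
    have hXC : (Polynomial.X - Polynomial.C (1:ℚ)) ^ k ≠ 0 :=
      pow_ne_zero _ (Polynomial.X_sub_C_ne_zero 1)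
    have hQeq : ∀ ic : ZMod (a+b), ∑ d : ZMod (a+b), F16 a b ((ic - d).val) * Q d = 0 := by
      intro ic
      have h := hPeq ic
      have : ∑ d : ZMod (a+b), F16 a b ((ic - d).val) * P d
          = (Polynomial.X - Polynomial.C 1) ^ k * ∑ d : ZMod (a+b), F16 a b ((ic - d).val) * Q d := by
        rw [Finset.mul_sum]
        refine Finset.sum_congr rfl fun d _ => ?_
        rw [hQ d]; ring
      rw [this] at h
      rcases mul_eq_zero.mp h with h' | h'
      · exact absurd h' hXC
      · exact h'
    have hQ0 : Q 0 = 0 := by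
      have := hQ 0
      rw [hP0] at this
      rcases mul_eq_zero.mp this.symm with h' | h'
      · exact absurd h' hXC
      · exact h'
    have hQd₁ : (Q d₁).eval 1 ≠ 0 := by
      intro h
      have hdvd1 : (Polynomial.X - Polynomial.C (1:ℚ)) ∣ Q d₁ :=
        Polynomial.dvd_iff_isRoot.mpr h
      have : (Polynomial.X - Polynomial.C (1:ℚ)) ^ (k+1) ∣ P d₁ := by
        rw [hQ d₁, pow_succ]
        exact mul_dvd_mul_left _ hdvd1
      have hle := (Polynomial.le_rootMultiplicity_iff hd₁ne).mpr this
      omega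
    -- evaluate at 1
    set U : ZMod (a+b) → ℚ := fun d => (Q d).eval 1 with hUdef
    have hUeq : ∀ ic : ZMod (a+b), ∑ d : ZMod (a+b), G16 a b ((ic - d).val) * U d = 0 := by
      intro ic
      have h := congrArg (Polynomial.eval 1) (hQeq ic)
      rw [Polynomial.eval_finset_sum, Polynomial.eval_zero] at h
      rw [← h]
      refine Finset.sum_congr rfl fun d _ => ?_
      rw [Polynomial.eval_mul, evalF16 _ ha hab]
    have hrec : ∀ i : ZMod (a+b),
        2 * U i = U (i + ((a:ℕ) : ZMod (a+b))) + U (i - ((a:ℕ) : ZMod (a+b))) := by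
      intro i
      have h := hUeq i
      have hcond : ∀ (c d : ZMod (a+b)), (i - d = c) = (d = i - c) := by
        intro c d
        exact propext ⟨fun h => by rw [← h, sub_sub_cancel], fun h => by rw [h, sub_sub_cancel]⟩
      simp only [Gval ha hab, hcond, add_mul, ite_mul, zero_mul, neg_mul,
        Finset.sum_add_distrib, Finset.sum_ite_eq', Finset.mem_univ, if_true,
        sub_neg_eq_add, sub_zero] at h
      linarith
    exact hQd₁ (ker1 ha hab hcop U hrec (by simp [hUdef, hQ0]) d₁)
  · rintro ⟨c, rfl⟩
    funext i
    have : B.mulVec (fun _ => c) i = ∑ j, B i j * c := by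
      simp [Matrix.mulVec, dotProduct]
    rw [this, ← Finset.sum_mul, hrow i, zero_mul]
    rfl
end

section
/- Fix n ∈ ℤ and ε = (−1)ⁿ. Let B_q be the 3×3 matrix over ℤ[q,q⁻¹] of Example 1.12: B_q = [[1−qε, −q⁻¹ε−1−εq, 1+qε+q²], [1+qε+q², 1−qε, −1−qε−q²], [−q⁻¹ε−1−εq, 1+q⁻¹ε+qε, 1−qε]]. Then for every nonzero vector l ∈ ℤ[q,q⁻¹]³, B_q l ≠ 0; i.e. B_q has trivial kernel over ℤ[q,q⁻¹]. -/
open LaurentPolynomial Matrix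

noncomputable def ev2m : Multiplicative ℤ →* ℚ where
  toFun m := (2 : ℚ) ^ (Multiplicative.toAdd m)
  map_one' := by simp
  map_mul' a b := by simp [zpow_add₀ (two_ne_zero (α := ℚ))]

noncomputable def ev2 : LaurentPolynomial ℤ →ₐ[ℤ] ℚ :=
  AddMonoidAlgebra.lift ℤ ℚ ℤ ev2m

lemma ev2_T (k : ℤ) : ev2 (T k) = (2 : ℚ) ^ k := by
  have h : T k = AddMonoidAlgebra.single k (1 : ℤ) := rfl
  rw [h, ev2, AddMonoidAlgebra.lift_single]
  simp [ev2m]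

lemma sgn_even {n : ℤ} (h : Even n) : sgn n = 1 := by
  obtain ⟨k, rfl⟩ := h
  rw [sgn, ← two_mul, _root_.zpow_mul]
  norm_num [zpow_two]

lemma sgn_odd {n : ℤ} (h : Odd n) : sgn n = -1 := by
  obtain ⟨k, rfl⟩ := h
  rw [sgn, _root_.zpow_add, _root_.zpow_mul]
  norm_num [zpow_two]

/-- The 3×3 q-intersection matrix `B_q` of Example 1.12 has trivial kernel over
`ℤ[q,q⁻¹]`. -/
theorem stmt19 (n : ℤ)
    (B : Matrix (Fin 3) (Fin 3) (LaurentPolynomial ℤ))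
    (hB : B = Matrix.of
      ![![1 - T 1 * sgn n, -(T (-1)) * sgn n - 1 - sgn n * T 1, 1 + T 1 * sgn n + T 2],
        ![1 + T 1 * sgn n + T 2, 1 - T 1 * sgn n, -1 - T 1 * sgn n - T 2],
        ![-(T (-1)) * sgn n - 1 - sgn n * T 1, 1 + T (-1) * sgn n + T 1 * sgn n,
          1 - T 1 * sgn n]]) :
    ∀ l : Fin 3 → LaurentPolynomial ℤ, l ≠ 0 → B.mulVec l ≠ 0 := by
  intro l hl h
  have hdet : B.det ≠ 0 := by
    intro hd
    have := congrArg ev2 hd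
    rw [Matrix.det_fin_three, hB] at this
    rcases Int.even_or_odd n with hn | hn
    · simp only [sgn_even hn, Matrix.of_apply, Matrix.cons_val', Matrix.cons_val_zero,
        Matrix.cons_val_one, Matrix.head_cons, Matrix.head_fin_const, Matrix.cons_val_two,
        Matrix.tail_cons, map_add, map_sub, _root_.map_mul, _root_.map_one, map_neg, map_zero,
        ev2_T] at this
      norm_num at this
    · simp only [sgn_odd hn, Matrix.of_apply, Matrix.cons_val', Matrix.cons_val_zero,
        Matrix.cons_val_one, Matrix.head_cons, Matrix.head_fin_const, Matrix.cons_val_two,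
        Matrix.tail_cons, map_add, map_sub, _root_.map_mul, _root_.map_one, map_neg, map_zero,
        ev2_T] at this
      norm_num at this
  have key : B.det • l = 0 := by
    have : B.adjugate *ᵥ (B *ᵥ l) = B.det • l := by
      rw [Matrix.mulVec_mulVec, Matrix.adjugate_mul, Matrix.smul_mulVec,
        Matrix.one_mulVec]
    rw [h, Matrix.mulVec_zero] at this
    exact this.symm
  apply hl
  funext i
  have := congrFun key i
  simp only [Pi.smul_apply, smul_eq_mul, Pi.zero_apply] at this
  exact (mul_eq_zero.mp this).resolve_left hdet
end
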